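/- Let β ∈ (-1,0), p ≥ 1, α ∈ (0,1) with 1 + βp > 0 and 3 + (α+β-3)p > 0, and let T > 0. Then ∫₀ᵀ (T-s)^{(α-1)p} ( ∫₀^s |((T-v+ε)^β - (T-v)^β) - ((s-v+ε)^β - (s-v)^β)|^p dv ) ds → 0 as ε → 0⁺. -/

import Mathlib

open MeasureTheory Real Filter

private lemma aux_hasDeriv (β ε : ℝ) {t : ℝ} (hε : 0 < ε) (ht : 0 < t) :
    HasDerivAt (fun u : ℝ => (u + ε) ^ β - u ^ β)
      (β * (t + ε) ^ (β - 1) - β * t ^ (β - 1)) t := by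
  have h1 : HasDerivAt (fun u : ℝ => (u + ε) ^ β) (β * (t + ε) ^ (β - 1)) t := by
    have := (Real.hasDerivAt_rpow_const (x := t + ε) (p := β)
      (Or.inl (by positivity))).comp t ((hasDerivAt_id t).add_const ε)
    simpa [Function.comp_def] using this
  exact h1.sub (Real.hasDerivAt_rpow_const (Or.inl ht.ne'))

private lemma aux_mono (β : ℝ) (hβ0 : β < 0) {ε : ℝ} (hε : 0 < ε) {x y : ℝ}
    (hx : 0 < x) (hxy : x ≤ y) :
    (x + ε) ^ β - x ^ β ≤ (y + ε) ^ β - y ^ β := by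
  have hmono : MonotoneOn (fun u : ℝ => (u + ε) ^ β - u ^ β) (Set.Ici x) := by
    apply monotoneOn_of_deriv_nonneg (convex_Ici x)
    · intro t ht
      exact (aux_hasDeriv β ε hε (lt_of_lt_of_le hx ht)).continuousAt.continuousWithinAt
    · intro t ht
      rw [interior_Ici] at ht
      exact (aux_hasDeriv β ε hε (hx.trans ht)).differentiableAt.differentiableWithinAt
    · intro t ht
      rw [interior_Ici] at ht
      have ht' : 0 < t := hx.trans ht
      rw [(aux_hasDeriv β ε hε ht').deriv]
      have h2 : (t + ε) ^ (β - 1) ≤ t ^ (β - 1) :=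
        Real.rpow_le_rpow_of_nonpos ht' (by linarith) (by linarith)
      nlinarith
  exact hmono Set.self_mem_Ici hxy hxy

private lemma aux_key (β p : ℝ) (hβ0 : β < 0) (hp0 : 0 < p) {ε x y : ℝ}
    (hε : 0 < ε) (hx : 0 < x) (hxy : x ≤ y) :
    |((y + ε) ^ β - y ^ β) - ((x + ε) ^ β - x ^ β)| ^ p ≤ x ^ (β * p) := by
  have hy : 0 < y := lt_of_lt_of_le hx hxy
  have h1 : (x + ε) ^ β - x ^ β ≤ (y + ε) ^ β - y ^ β := aux_mono β hβ0 hε hx hxy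
  have h2 : (y + ε) ^ β ≤ y ^ β :=
    Real.rpow_le_rpow_of_nonpos hy (by linarith) hβ0.le
  have h2' : (x + ε) ^ β ≤ x ^ β :=
    Real.rpow_le_rpow_of_nonpos hx (by linarith) hβ0.le
  have h3 : 0 ≤ (x + ε) ^ β := Real.rpow_nonneg (by linarith) β
  have habs : |((y + ε) ^ β - y ^ β) - ((x + ε) ^ β - x ^ β)| ≤ x ^ β := by
    rw [abs_of_nonneg (by linarith)]
    linarith
  calc |((y + ε) ^ β - y ^ β) - ((x + ε) ^ β - x ^ β)| ^ p
      ≤ (x ^ β) ^ p := Real.rpow_le_rpow (abs_nonneg _) habs hp0.le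
    _ = x ^ (β * p) := (Real.rpow_mul hx.le β p).symm

private lemma aux_intInt (r s : ℝ) (hr : -1 < r) :
    IntervalIntegrable (fun v => (s - v) ^ r) volume 0 s := by
  have := ((intervalIntegral.intervalIntegrable_rpow' (a := 0) (b := s) hr).comp_sub_left s).symm
  simpa using this

private lemma aux_intVal (r s : ℝ) (hr : -1 < r) (hs : 0 ≤ s) :
    (∫ v in (0:ℝ)..s, (s - v) ^ r) = s ^ (r + 1) / (r + 1) := by
  rw [intervalIntegral.integral_comp_sub_left (fun u => u ^ r) s]
  simp only [sub_self, sub_zero]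
  rw [integral_rpow (Or.inl hr)]
  rw [Real.zero_rpow (by linarith)]
  ring

private lemma ae_ne_restrict (s : Set ℝ) (a : ℝ) : ∀ᵐ x ∂(volume.restrict s), x ≠ a := by
  refine ae_iff.2 ?_
  have h : {x : ℝ | ¬ x ≠ a} = {a} := by ext x; simp
  rw [h]
  exact le_antisymm ((Measure.restrict_apply_le _ _).trans_eq (by simp)) (zero_le)

theorem stmt_12 (β p α T : ℝ) (hβ : β ∈ Set.Ioo (-1:ℝ) 0) (hp : 1 ≤ p)
    (hα : α ∈ Set.Ioo (0:ℝ) 1) (h1 : 0 < 1 + β * p) (h2 : 0 < 3 + (α + β - 3) * p)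
    (hT : 0 < T) :
    Tendsto (fun ε : ℝ => ∫ s in (0:ℝ)..T, (T - s) ^ ((α - 1) * p) *
        ∫ v in (0:ℝ)..s,
          |((T - v + ε) ^ β - (T - v) ^ β) - ((s - v + ε) ^ β - (s - v) ^ β)| ^ p)
      (nhdsWithin 0 (Set.Ioi 0)) (nhds 0) := by
  obtain ⟨hβ1, hβ0⟩ := hβ
  obtain ⟨hα0, hα1⟩ := hα
  have hp0 : 0 < p := lt_of_lt_of_le one_pos hp
  have hbp : -1 < β * p := by linarith
  have hap : -1 < (α - 1) * p := by nlinarith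
  have hbp1 : 0 < β * p + 1 := by linarith
  set C : ℝ := T ^ (β * p + 1) / (β * p + 1) with hC
  have hC0 : 0 ≤ C := by positivity
  -- inner integrand as a function
  set K : ℝ → ℝ → ℝ → ℝ := fun ε s v =>
    |((T - v + ε) ^ β - (T - v) ^ β) - ((s - v + ε) ^ β - (s - v) ^ β)| ^ p with hK
  have hKnonneg : ∀ ε s v, 0 ≤ K ε s v := fun ε s v => Real.rpow_nonneg (abs_nonneg _) p
  have hKmeas : ∀ ε σ, Measurable (fun v => K ε σ v) := by intro ε σ; rw [hK]; fun_prop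
  -- pointwise bound
  have hKbound : ∀ ε > (0:ℝ), ∀ s ∈ Set.Ioc (0:ℝ) T, ∀ v ∈ Set.Ioc (0:ℝ) s, v ≠ s →
      K ε s v ≤ (s - v) ^ (β * p) := by
    intro ε hε s hs v hv hvs
    have hx : 0 < s - v := lt_of_le_of_ne (sub_nonneg.2 hv.2) (fun h => hvs (by linarith [h.symm]))
    exact aux_key β p hβ0 hp0 hε hx (by linarith [hs.2])
  -- inner integral bound
  have hInner : ∀ ε > (0:ℝ), ∀ s ∈ Set.Ioc (0:ℝ) T,
      (∫ v in (0:ℝ)..s, K ε s v) ≤ C := by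
    intro ε hε s hs
    have hbInt : IntervalIntegrable (fun v => (s - v) ^ (β * p)) volume 0 s :=
      aux_intInt (β * p) s hbp
    have haeb : ∀ᵐ v ∂(volume.restrict (Set.Icc (0:ℝ) s)),
        K ε s v ≤ (s - v) ^ (β * p) := by
      filter_upwards [ae_restrict_mem measurableSet_Icc, ae_ne_restrict (Set.Icc 0 s) s,
        ae_ne_restrict (Set.Icc 0 s) 0] with v hv hvs hv0
      have hv' : v ∈ Set.Ioc (0:ℝ) s :=
        ⟨lt_of_le_of_ne hv.1 (Ne.symm hv0), hv.2⟩
      exact hKbound ε hε s hs v hv' hvs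
    have hKInt : IntervalIntegrable (fun v => K ε s v) volume 0 s := by
      apply hbInt.mono_fun' ((hKmeas ε s).aestronglyMeasurable)
      have hsub : Set.uIoc (0:ℝ) s ⊆ Set.Icc 0 s := by
        rw [Set.uIoc_of_le hs.1.le]; exact Set.Ioc_subset_Icc_self
      have h := haeb.filter_mono (ae_mono (Measure.restrict_mono hsub le_rfl))
      filter_upwards [h] with v hv
      rw [Real.norm_eq_abs, abs_of_nonneg (hKnonneg ε s v)]
      exact hv
    calc (∫ v in (0:ℝ)..s, K ε s v) ≤ ∫ v in (0:ℝ)..s, (s - v) ^ (β * p) :=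
          intervalIntegral.integral_mono_ae_restrict hs.1.le hKInt hbInt haeb
      _ = s ^ (β * p + 1) / (β * p + 1) := aux_intVal (β * p) s hbp hs.1.le
      _ ≤ C := by
          rw [hC]
          gcongr
          exacts [hs.1.le, hs.2]
  -- reduce to set integral
  have hstep : Tendsto (fun ε : ℝ => ∫ s in Set.Ioc (0:ℝ) T,
      (T - s) ^ ((α - 1) * p) * ∫ v in (0:ℝ)..s, K ε s v)
      (nhdsWithin 0 (Set.Ioi 0)) (nhds 0) := by
    have hd := tendsto_integral_filter_of_dominated_convergence
      (μ := volume.restrict (Set.Ioc (0:ℝ) T))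
      (F := fun (ε : ℝ) (s : ℝ) => (T - s) ^ ((α - 1) * p) * ∫ v in (0:ℝ)..s, K ε s v)
      (f := fun _ => (0:ℝ)) (l := nhdsWithin 0 (Set.Ioi 0))
      (fun s => (T - s) ^ ((α - 1) * p) * C) ?_ ?_ ?_ ?_
    · simpa using hd
    · -- measurability
      filter_upwards with ε
      have hbig : Measurable (fun q : ℝ × ℝ => ({q : ℝ × ℝ | q.2 ∈ Set.Ioc 0 q.1}.indicator
          (fun q : ℝ × ℝ => K ε q.1 q.2) q)) := by
        apply Measurable.indicator
        · rw [hK]; fun_prop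
        · have : {q : ℝ × ℝ | q.2 ∈ Set.Ioc 0 q.1} =
              {q : ℝ × ℝ | (0:ℝ) < q.2} ∩ {q : ℝ × ℝ | q.2 ≤ q.1} := by
            ext q; simp [Set.mem_Ioc, and_comm]
          rw [this]
          exact (measurableSet_lt measurable_const measurable_snd).inter
            (measurableSet_le measurable_snd measurable_fst)
      have hG : StronglyMeasurable (fun s : ℝ => ∫ v : ℝ,
          ({q : ℝ × ℝ | q.2 ∈ Set.Ioc 0 q.1}.indicator (fun q : ℝ × ℝ => K ε q.1 q.2) (s, v))) :=
        hbig.stronglyMeasurable.integral_prod_right'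
      have hout : Measurable (fun s : ℝ => (T - s) ^ ((α - 1) * p)) := by fun_prop
      apply AEStronglyMeasurable.congr
        (hout.aestronglyMeasurable.mul hG.aestronglyMeasurable)
      filter_upwards [ae_restrict_mem measurableSet_Ioc] with s hs
      congr 1
      rw [intervalIntegral.integral_of_le hs.1.le,
        ← MeasureTheory.integral_indicator measurableSet_Ioc]
      simp only [Pi.mul_apply]
      rfl
    · -- bound
      filter_upwards [self_mem_nhdsWithin] with ε hε
      rw [Set.mem_Ioi] at hε
      filter_upwards [ae_restrict_mem measurableSet_Ioc] with s hs
      have hTs : (0:ℝ) ≤ T - s := by linarith [hs.2]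
      have he1 : 0 ≤ (T - s) ^ ((α - 1) * p) := Real.rpow_nonneg hTs _
      have hInn0 : 0 ≤ ∫ v in (0:ℝ)..s, K ε s v :=
        intervalIntegral.integral_nonneg hs.1.le (fun v _ => hKnonneg ε s v)
      rw [Real.norm_eq_abs, abs_of_nonneg (mul_nonneg he1 hInn0)]
      exact mul_le_mul_of_nonneg_left (hInner ε hε s hs) he1
    · -- bound integrable
      exact ((aux_intInt ((α - 1) * p) T hap).1).mul_const C
    · -- pointwise limit
      filter_upwards [ae_restrict_mem measurableSet_Ioc, ae_ne_restrict (Set.Ioc 0 T) T]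
        with s hs hsT
      have hsT' : s < T := lt_of_le_of_ne hs.2 hsT
      have hinner : Tendsto (fun ε => ∫ v in Set.Ioc (0:ℝ) s, K ε s v)
          (nhdsWithin 0 (Set.Ioi 0)) (nhds 0) := by
        have hd := tendsto_integral_filter_of_dominated_convergence
          (μ := volume.restrict (Set.Ioc (0:ℝ) s))
          (F := fun (ε : ℝ) (v : ℝ) => K ε s v)
          (f := fun _ => (0:ℝ)) (l := nhdsWithin 0 (Set.Ioi 0))
          (fun v => (s - v) ^ (β * p)) ?_ ?_ ?_ ?_
        · simpa using hd
        · filter_upwards with ε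
          exact (hKmeas ε s).aestronglyMeasurable
        · filter_upwards [self_mem_nhdsWithin] with ε hε
          rw [Set.mem_Ioi] at hε
          filter_upwards [ae_restrict_mem measurableSet_Ioc, ae_ne_restrict (Set.Ioc 0 s) s]
            with v hv hvs
          rw [Real.norm_eq_abs, abs_of_nonneg (hKnonneg ε s v)]
          exact hKbound ε hε s hs v hv hvs
        · exact (aux_intInt (β * p) s hbp).1
        · filter_upwards [ae_restrict_mem measurableSet_Ioc, ae_ne_restrict (Set.Ioc 0 s) s]
            with v hv hvs
          have hx : 0 < s - v := lt_of_le_of_ne (sub_nonneg.2 hv.2) (fun h => hvs (by linarith))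
          have hy : 0 < T - v := by linarith
          have c1 : ContinuousAt (fun ε : ℝ => (T - v + ε) ^ β) 0 := by
            have h := Real.continuousAt_rpow_const (T - v + 0) β (Or.inl (by linarith))
            exact h.comp ((continuous_const.add continuous_id).continuousAt)
          have c2 : ContinuousAt (fun ε : ℝ => (s - v + ε) ^ β) 0 := by
            have h := Real.continuousAt_rpow_const (s - v + 0) β (Or.inl (by linarith))
            exact h.comp ((continuous_const.add continuous_id).continuousAt)
          have cabs : ContinuousAt (fun ε : ℝ =>
              |((T - v + ε) ^ β - (T - v) ^ β) - ((s - v + ε) ^ β - (s - v) ^ β)|) 0 :=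
            ((c1.sub continuousAt_const).sub (c2.sub continuousAt_const)).abs
          have c : ContinuousAt (fun ε : ℝ => K ε s v) 0 := by
            rw [hK]
            exact cabs.rpow_const (Or.inr hp0.le)
          have hval : K 0 s v = 0 := by
            rw [hK]
            simp only [add_zero, sub_self, abs_zero]
            exact Real.zero_rpow hp0.ne'
          have hten := c.tendsto.mono_left
            (nhdsWithin_le_nhds (s := Set.Ioi (0:ℝ)))
          rwa [hval] at hten
      have heq : ∀ ε : ℝ, (∫ v in (0:ℝ)..s, K ε s v) = ∫ v in Set.Ioc (0:ℝ) s, K ε s v :=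
        fun ε => intervalIntegral.integral_of_le hs.1.le
      have hfin := Tendsto.const_mul ((T - s) ^ ((α - 1) * p)) hinner
      rw [mul_zero] at hfin
      simpa only [heq] using hfin
  simpa only [intervalIntegral.integral_of_le hT.le] using hstep
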